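/- Suppose V = {0^ℓ} ⊕ V' with V' ⊆ F = F_{q^m}, dim V = ℓ, and U ⊆ W = F_q^ℓ × F satisfies dim(U) = ℓ - κ + γ and dim(U ∩ V) = ℓ - κ. Then the projections U' = U|_F and V' satisfy d(U', V') ≤ κ + γ. -/

import Mathlib

lemma aux_finrank_map_eq {K M N : Type*} [Field K] [AddCommGroup M] [Module K M]
    [AddCommGroup N] [Module K N] [FiniteDimensional K M]
    (f : M →ₗ[K] N) (p : Submodule K M) (h : p ⊓ LinearMap.ker f = ⊥) :
    Module.finrank K (p.map f) = Module.finrank K p := by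
  have hinj : Function.Injective (f.domRestrict p) :=
    LinearMap.injective_domRestrict_iff.mpr (disjoint_iff.mpr h)
  have hrange : LinearMap.range (f.domRestrict p) = p.map f := by
    rw [LinearMap.domRestrict, LinearMap.range_comp, Submodule.range_subtype]
  rw [← hrange, LinearMap.finrank_range_of_inj hinj]

/-- If `V = {0^ℓ} ⊕ V'` has dimension `ℓ`, `dim U = ℓ - κ + γ` and
`dim (U ∩ V) = ℓ - κ`, then the projections satisfy `d(U', V') ≤ κ + γ`. -/
theorem stmt11 (K L : Type*) [Field K] [Fintype K] [Field L] [Algebra K L]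
    [FiniteDimensional K L] (ℓ κ γ : ℕ) (hκ : κ ≤ ℓ)
    (V' : Submodule K L) (U : Submodule K ((Fin ℓ → K) × L))
    (hV : Module.finrank K
      ↥(Submodule.prod (⊥ : Submodule K (Fin ℓ → K)) V') = ℓ)
    (hU : Module.finrank K ↥U = ℓ - κ + γ)
    (hUV : Module.finrank K
      ↥(U ⊓ Submodule.prod (⊥ : Submodule K (Fin ℓ → K)) V') = ℓ - κ) :
    (Module.finrank K ↥(U.map (LinearMap.snd K (Fin ℓ → K) L)) : ℤ)
      + (Module.finrank K ↥V' : ℤ)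
      - 2 * (Module.finrank K ↥(U.map (LinearMap.snd K (Fin ℓ → K) L) ⊓ V') : ℤ)
      ≤ (κ : ℤ) + (γ : ℤ) := by
  set f := LinearMap.snd K (Fin ℓ → K) L
  -- finrank V' = ℓ
  have hV' : Module.finrank K V' = ℓ := by
    rw [← hV, ← Submodule.map_inr,
      aux_finrank_map_eq _ V' (by rw [Submodule.ker_inr, inf_bot_eq])]
  -- finrank of projection of U is ≤ ℓ - κ + γ
  have h1 : Module.finrank K (U.map f) ≤ ℓ - κ + γ := hU ▸ Submodule.finrank_map_le f U
  -- the projection of U ⊓ V has full rank ℓ - κ and lies in U' ⊓ V'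
  have hker : (U ⊓ Submodule.prod (⊥ : Submodule K (Fin ℓ → K)) V') ⊓ LinearMap.ker f = ⊥ := by
    rw [eq_bot_iff]
    rintro ⟨x, y⟩ ⟨⟨-, ⟨hx, -⟩⟩, hy⟩
    simp only [LinearMap.mem_ker, Submodule.mem_bot] at *
    exact Prod.ext hx hy
  have hmapeq : Module.finrank K
      ((U ⊓ Submodule.prod (⊥ : Submodule K (Fin ℓ → K)) V').map f) = ℓ - κ := by
    rw [aux_finrank_map_eq _ _ hker, hUV]
  have hle : (U ⊓ Submodule.prod (⊥ : Submodule K (Fin ℓ → K)) V').map f ≤ U.map f ⊓ V' := by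
    rintro y ⟨⟨x, z⟩, ⟨hxU, ⟨-, hxV⟩⟩, rfl⟩
    exact ⟨⟨_, hxU, rfl⟩, hxV⟩
  have h2 : (ℓ - κ : ℕ) ≤ Module.finrank K (U.map f ⊓ V' : Submodule K L) := by
    rw [← hmapeq]; exact Submodule.finrank_mono hle
  have hsub : (ℓ : ℤ) - κ = ((ℓ - κ : ℕ) : ℤ) := by omega
  have h1' : (Module.finrank K (U.map f) : ℤ) ≤ (ℓ - κ : ℕ) + γ := by exact_mod_cast h1
  have h2' : ((ℓ - κ : ℕ) : ℤ) ≤ (Module.finrank K (U.map f ⊓ V' : Submodule K L) : ℤ) := by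
    exact_mod_cast h2
  omega
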